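/- Suppose condition (N_est) holds with parameter M > 0 and n is large enough that η₁ n/(2N) ≥ 8. Then almost surely TSPC_n ≤ (Σ_{l=1}^N T_l + 2N(s_n + 8r_n))·1(U_tot) + 5√n·1(U_tot^c), where U_tot = ∩_{l=1}^N U_l. -/

import Mathlib

open MeasureTheory ProbabilityTheory Filter Finset
open scoped ENNReal Classical

noncomputable section

/-- Length of the closed tour visiting the points of `l` in cyclic order. -/
def tourLength (l : List (ℝ × ℝ)) : ℝ :=
  ((l.zip (l.rotate 1)).map fun p => dist p.1 p.2).sum

/-- TSP length of a finite set of points in the plane: the minimum over spanning cycles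
(cyclic orderings of the points) of the total edge length; `0` if there are at most
two points. -/
def tspLength (P : Finset (ℝ × ℝ)) : ℝ :=
  if P.card ≤ 2 then 0
  else sInf {L : ℝ | ∃ l : List (ℝ × ℝ), l.Nodup ∧ l.toFinset = P ∧ L = tourLength l}

/-- Axis-parallel square with lower-left corner `c` and side length `r`. -/
def square (c : ℝ × ℝ) (r : ℝ) : Set (ℝ × ℝ) := Set.Icc c (c.1 + r, c.2 + r)

def unitSquare : Set (ℝ × ℝ) := square (0, 0) 1

/-- A set of lattice points is connected for nearest-neighbour adjacency. -/
def latticeConnected (A : Set (ℤ × ℤ)) : Prop :=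
  ∀ a ∈ A, ∀ b ∈ A,
    Relation.ReflTransGen
      (fun u v => u ∈ A ∧ v ∈ A ∧ |u.1 - v.1| + |u.2 - v.2| = 1) a b

/-- head with default -/
def headD' {α : Type*} : List α → α → α
  | [], d => d
  | a :: _, _ => a

/-- last with default -/
def lastD' {α : Type*} : List α → α → α
  | [], d => d
  | a :: t, _ => lastD' t a

/-- open path length -/
def pathLength : List (ℝ × ℝ) → ℝ
  | [] => 0
  | [_] => 0
  | a :: b :: t => dist a b + pathLength (b :: t)

@[simp] lemma headD'_nil {α : Type*} (d : α) : headD' [] d = d := rfl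
@[simp] lemma headD'_cons {α : Type*} (a : α) (l : List α) (d : α) : headD' (a :: l) d = a := rfl
@[simp] lemma lastD'_nil {α : Type*} (d : α) : lastD' [] d = d := rfl
@[simp] lemma lastD'_cons {α : Type*} (a : α) (l : List α) (d : α) :
    lastD' (a :: l) d = lastD' l a := rfl

lemma lastD'_append {α : Type*} (l₁ l₂ : List α) (d : α) :
    lastD' (l₁ ++ l₂) d = lastD' l₂ (lastD' l₁ d) := by
  induction l₁ generalizing d with
  | nil => simp
  | cons a t ih => simp [ih]

lemma lastD'_irrel {α : Type*} (l : List α) (h : l ≠ []) (d d' : α) :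
    lastD' l d = lastD' l d' := by
  cases l with
  | nil => exact absurd rfl h
  | cons a t => simp

lemma headD'_append_ne_nil {α : Type*} (l₁ l₂ : List α) (h : l₁ ≠ []) (d : α) :
    headD' (l₁ ++ l₂) d = headD' l₁ d := by
  cases l₁ with
  | nil => exact absurd rfl h
  | cons a t => simp

lemma headD'_mem {α : Type*} (l : List α) (h : l ≠ []) (d : α) : headD' l d ∈ l := by
  cases l with
  | nil => exact absurd rfl h
  | cons a t => simp

lemma lastD'_mem {α : Type*} (l : List α) (h : l ≠ []) (d : α) : lastD' l d ∈ l := by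
  induction l generalizing d with
  | nil => exact absurd rfl h
  | cons a t ih =>
    cases t with
    | nil => simp
    | cons b t' =>
      rw [lastD'_cons]
      exact List.mem_cons_of_mem a (ih (by simp) a)

lemma headD'_map {α β : Type*} (f : α → β) (l : List α) (d : α) :
    headD' (l.map f) (f d) = f (headD' l d) := by cases l <;> simp

lemma lastD'_map {α β : Type*} (f : α → β) (l : List α) (d : α) :
    lastD' (l.map f) (f d) = f (lastD' l d) := by
  induction l generalizing d with
  | nil => simp
  | cons a t ih => simp [ih]

@[simp] lemma pathLength_nil : pathLength [] = 0 := rfl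
@[simp] lemma pathLength_single (a : ℝ × ℝ) : pathLength [a] = 0 := rfl
@[simp] lemma pathLength_cons_cons (a b : ℝ × ℝ) (t : List (ℝ × ℝ)) :
    pathLength (a :: b :: t) = dist a b + pathLength (b :: t) := rfl

lemma pathLength_nonneg (l : List (ℝ × ℝ)) : 0 ≤ pathLength l := by
  induction l with
  | nil => simp
  | cons a t ih =>
    cases t with
    | nil => simp
    | cons b t' => simpa using add_nonneg dist_nonneg ih

lemma dist_headD'_lastD' (l : List (ℝ × ℝ)) (d d' : ℝ × ℝ) (h : l ≠ []) :
    dist (headD' l d) (lastD' l d') ≤ pathLength l := by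
  induction l generalizing d d' with
  | nil => exact absurd rfl h
  | cons a t ih =>
    cases t with
    | nil => simp
    | cons b t' =>
      calc dist a (lastD' (b :: t') a)
          ≤ dist a b + dist b (lastD' (b :: t') a) := dist_triangle _ _ _
        _ ≤ dist a b + pathLength (b :: t') := by
            have := ih (d := b) (d' := a) (by simp)
            simpa using this
        _ = pathLength (a :: b :: t') := rfl

lemma pathLength_append (l₁ l₂ : List (ℝ × ℝ)) (h₁ : l₁ ≠ []) (h₂ : l₂ ≠ []) (d d' : ℝ × ℝ) :
    pathLength (l₁ ++ l₂) =
      pathLength l₁ + dist (lastD' l₁ d) (headD' l₂ d') + pathLength l₂ := by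
  induction l₁ generalizing d with
  | nil => exact absurd rfl h₁
  | cons a t ih =>
    cases t with
    | nil =>
      cases l₂ with
      | nil => exact absurd rfl h₂
      | cons b t₂ => simp [pathLength_cons_cons]; try ring
    | cons b t' =>
      have := ih (by simp) a
      simp only [List.cons_append, pathLength_cons_cons, lastD'_cons] at *
      rw [this]; ring

lemma tour_aux (t : List (ℝ × ℝ)) (a x : ℝ × ℝ) :
    (((a :: t).zip (t ++ [x])).map fun p => dist p.1 p.2).sum =
      pathLength (a :: t) + dist (lastD' (a :: t) x) x := by
  induction t generalizing a with
  | nil => simp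
  | cons b t' ih =>
    have := ih b
    simp only [List.cons_append, List.zip_cons_cons, List.map_cons, List.sum_cons] at *
    rw [this, pathLength_cons_cons]
    simp only [lastD'_cons]
    ring

lemma tourLength_eq (l : List (ℝ × ℝ)) (h : l ≠ []) (d d' : ℝ × ℝ) :
    tourLength l = pathLength l + dist (lastD' l d) (headD' l d') := by
  cases l with
  | nil => exact absurd rfl h
  | cons a t =>
    have : (a :: t).rotate 1 = t ++ [a] := by
      rw [List.rotate_cons_succ, List.rotate_zero]
    rw [tourLength, this, tour_aux t a a]
    simp [lastD'_cons]

lemma tourLength_nonneg (l : List (ℝ × ℝ)) : 0 ≤ tourLength l := by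
  apply List.sum_nonneg
  intro x hx
  simp only [List.mem_map] at hx
  obtain ⟨p, _, rfl⟩ := hx
  exact dist_nonneg

lemma pathLength_le_tourLength (l : List (ℝ × ℝ)) (h : l ≠ []) :
    pathLength l ≤ tourLength l := by
  rw [tourLength_eq l h 0 0]
  have := dist_nonneg (x := lastD' l 0) (y := headD' l 0)
  linarith


/-- shortcut lemma for paths over sublists -/
lemma pathLength_sublist {l' l : List (ℝ × ℝ)} (hsub : l'.Sublist l) (h' : l' ≠ []) (d : ℝ × ℝ) :
    dist (headD' l d) (headD' l' d) + pathLength l' + dist (lastD' l' d) (lastD' l d)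
      ≤ pathLength l := by
  induction hsub with
  | slnil => exact absurd rfl h'
  | @cons l₁ l₂ a hsub ih =>
    -- l₁ <+ l₂ sublist, conclude for a :: l₂
    have hl₂ : l₂ ≠ [] := by
      intro h; subst h; exact h' (List.sublist_nil.mp hsub)
    have ihh := ih h'
    obtain ⟨b, t, rfl⟩ := List.exists_cons_of_ne_nil hl₂
    have htri : dist a (headD' l₁ d) ≤ dist a b + dist b (headD' l₁ d) := dist_triangle _ _ _
    cases t with
    | nil =>
      simp only [headD'_cons, lastD'_cons] at *
      have : pathLength [a, b] = dist a b := by simp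
      rw [show lastD' [] b = b from rfl] at *
      calc dist (headD' (a :: [b]) d) (headD' l₁ d) + pathLength l₁ +
            dist (lastD' l₁ d) (lastD' [b] a)
          = dist a (headD' l₁ d) + pathLength l₁ + dist (lastD' l₁ d) b := by simp
        _ ≤ (dist a b + dist b (headD' l₁ d)) + pathLength l₁ + dist (lastD' l₁ d) b := by
            gcongr
        _ ≤ dist a b + pathLength [b] := by
            have := ihh
            linarith
        _ ≤ pathLength (a :: [b]) := by simp
    | cons c t' =>
      have := ihh
      simp only [headD'_cons, lastD'_cons, pathLength_cons_cons] at this ⊢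
      have hlast : lastD' t' c = lastD' t' c := rfl
      calc dist a (headD' l₁ d) + pathLength l₁ + dist (lastD' l₁ d) (lastD' t' c)
          ≤ (dist a b + dist b (headD' l₁ d)) + pathLength l₁ + dist (lastD' l₁ d) (lastD' t' c) := by
            gcongr
        _ ≤ dist a b + (dist b c + pathLength (c :: t')) := by linarith
        _ = dist a b + (dist b c + pathLength (c :: t')) := rfl
  | @cons_cons l₁ l₂ a hsub ih =>
    by_cases h1 : l₁ = []
    · subst h1
      -- l' = [a], need dist of head self + 0 + dist a (last (a::l₂)) ≤ pathLength (a :: l₂)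
      simp only [headD'_cons, lastD'_cons, lastD'_nil, pathLength_single, dist_self]
      have := dist_headD'_lastD' (a :: l₂) d d (by simp)
      simpa using this
    · have ihh := ih h1
      have hl₂ : l₂ ≠ [] := by
        intro h; subst h; exact h1 (List.sublist_nil.mp hsub)
      obtain ⟨b, t, rfl⟩ := List.exists_cons_of_ne_nil hl₂
      obtain ⟨b', t', rfl⟩ := List.exists_cons_of_ne_nil h1
      simp only [headD'_cons, lastD'_cons, dist_self, pathLength_cons_cons] at ihh ⊢
      have htri : dist a b' ≤ dist a b + dist b b' := dist_triangle _ _ _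
      cases t' with
      | nil =>
        simp only [lastD'_nil] at *
        linarith
      | cons c' t'' =>
        simp only [pathLength_cons_cons] at *
        linarith

lemma tourLength_sublist {l' l : List (ℝ × ℝ)} (hsub : l'.Sublist l) :
    tourLength l' ≤ tourLength l := by
  rcases eq_or_ne l' ([] : List (ℝ × ℝ)) with rfl | h'
  · have : tourLength [] = 0 := by simp [tourLength]
    rw [this]; exact tourLength_nonneg l
  have hl : l ≠ [] := by
    intro h; subst h; exact h' (List.sublist_nil.mp hsub)
  have key := pathLength_sublist hsub h' 0
  rw [tourLength_eq l' h' 0 0, tourLength_eq l hl 0 0]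
  have t1 : dist (lastD' l' 0) (headD' l' 0) ≤
      dist (lastD' l' 0) (lastD' l 0) + dist (lastD' l 0) (headD' l 0)
        + dist (headD' l 0) (headD' l' 0) := by
    calc dist (lastD' l' 0) (headD' l' 0)
        ≤ dist (lastD' l' 0) (lastD' l 0) + dist (lastD' l 0) (headD' l' 0) :=
          dist_triangle _ _ _
      _ ≤ dist (lastD' l' 0) (lastD' l 0) +
          (dist (lastD' l 0) (headD' l 0) + dist (headD' l 0) (headD' l' 0)) := by
          gcongr; exact dist_triangle _ _ _
      _ = _ := by ring
  linarith

lemma tspLength_nonneg (P : Finset (ℝ × ℝ)) : 0 ≤ tspLength P := by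
  rw [tspLength]
  split
  · exact le_refl 0
  · apply Real.sInf_nonneg
    rintro x ⟨l, -, -, rfl⟩
    exact tourLength_nonneg l

lemma tspLength_le_tourLength (w : List (ℝ × ℝ)) (h : w ≠ []) :
    tspLength w.toFinset ≤ tourLength w := by
  rw [tspLength]
  split
  · exact tourLength_nonneg w
  · apply csInf_le_of_le (b := tourLength w.dedup)
    · exact ⟨0, fun x hx => by
        obtain ⟨l, _, _, rfl⟩ := hx
        exact tourLength_nonneg l⟩
    · exact ⟨w.dedup, List.nodup_dedup w,
        Finset.ext fun a => by simp [List.mem_toFinset], rfl⟩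
    · exact tourLength_sublist (List.dedup_sublist w)

lemma exists_good_tour (P : Finset (ℝ × ℝ)) (h3 : 3 ≤ P.card) {δ : ℝ} (hδ : 0 < δ) :
    ∃ l : List (ℝ × ℝ), l.Nodup ∧ l.toFinset = P ∧ tourLength l ≤ tspLength P + δ := by
  have hset : {L : ℝ | ∃ l : List (ℝ × ℝ), l.Nodup ∧ l.toFinset = P ∧ L = tourLength l}.Nonempty :=
    ⟨tourLength P.toList, P.toList, P.nodup_toList, by simp, rfl⟩
  have := Real.lt_sInf_add_pos hset hδ
  obtain ⟨a, ⟨l, hnd, hfs, rfl⟩, hlt⟩ := this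
  refine ⟨l, hnd, hfs, ?_⟩
  rw [tspLength, if_neg (by omega)]
  exact hlt.le

lemma toFinset_perm {α : Type*} [DecidableEq α] {l l' : List α} (h : l.Perm l') :
    l.toFinset = l'.toFinset :=
  Finset.ext fun a => by simp [List.mem_toFinset, h.mem_iff]

lemma pathLength_chain_bound (f : ℝ × ℝ → ℝ) (c : ℝ) (hc : 0 ≤ c)
    (R : ℝ × ℝ → ℝ × ℝ → Prop) :
    ∀ l : List (ℝ × ℝ), l ≠ [] → List.Chain' R l →
      (∀ p ∈ l, ∀ q ∈ l, R p q → dist p q ≤ f q - f p + c) →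
      pathLength l ≤ f (lastD' l 0) - f (headD' l 0) + ((l.length : ℝ) - 1) * c := by
  intro l
  induction l with
  | nil => intro h; exact absurd rfl h
  | cons a t ih =>
    intro _ hch hmem
    cases t with
    | nil => simp
    | cons b t' =>
      unfold List.Chain' at hch
      rw [List.isChain_cons_cons] at hch
      have hab : dist a b ≤ f b - f a + c :=
        hmem a (by simp) b (by simp) hch.1
      have iht := ih (by simp) hch.2
        (fun p hp q hq hpq => hmem p (by simp [hp]) q (by simp [hq]) hpq)
      simp only [pathLength_cons_cons, lastD'_cons, headD'_cons, List.length_cons] at *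
      push_cast
      push_cast at iht
      linarith

lemma edge_bound (k : ℕ) (hk : 1 ≤ k) (p q : ℝ × ℝ)
    (hp1 : 0 ≤ p.1) (hp1' : p.1 ≤ 1) (hp2 : 0 ≤ p.2) (hp2' : p.2 ≤ 1)
    (hq1 : 0 ≤ q.1) (hq1' : q.1 ≤ 1) (hq2 : 0 ≤ q.2) (hq2' : q.2 ≤ 1)
    (hK : 2 * ((⌊(k : ℝ) * p.2⌋ : ℤ) : ℝ) + p.1 ≤ 2 * ((⌊(k : ℝ) * q.2⌋ : ℤ) : ℝ) + q.1) :
    dist p q ≤ (q.1 + (2 + 1/k) * ((⌊(k : ℝ) * q.2⌋ : ℤ) : ℝ))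
      - (p.1 + (2 + 1/k) * ((⌊(k : ℝ) * p.2⌋ : ℤ) : ℝ)) + 1/k := by
  have hk0 : (0 : ℝ) < k := by exact_mod_cast Nat.lt_of_lt_of_le Nat.zero_lt_one hk
  set sp : ℤ := ⌊(k : ℝ) * p.2⌋ with hsp
  set sq : ℤ := ⌊(k : ℝ) * q.2⌋ with hsq
  have hpl : (sp : ℝ) ≤ k * p.2 := Int.floor_le _
  have hph : (k : ℝ) * p.2 < sp + 1 := Int.lt_floor_add_one _
  have hql : (sq : ℝ) ≤ k * q.2 := Int.floor_le _
  have hqh : (k : ℝ) * q.2 < sq + 1 := Int.lt_floor_add_one _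
  have hle : (sp : ℝ) ≤ sq := by
    by_contra hcon
    push_neg at hcon
    have h1 : sq + 1 ≤ sp := Int.add_one_le_iff.mpr (by exact_mod_cast hcon)
    have h2 : (sq : ℝ) + 1 ≤ sp := by exact_mod_cast h1
    linarith
  have hinvk : (0:ℝ) < 1/k := by positivity
  have hring : (2 + 1/(k:ℝ)) * (sq:ℝ) - (2 + 1/(k:ℝ)) * (sp:ℝ)
      = 2 * ((sq:ℝ) - sp) + ((sq:ℝ) - sp) / k := by ring
  rw [Prod.dist_eq, Real.dist_eq, Real.dist_eq]
  rcases eq_or_lt_of_le hle with heq | hlt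
  · -- same strip
    have hxle : p.1 ≤ q.1 := by linarith
    have hy1 : q.2 - p.2 ≤ 1/k := by
      rw [← heq] at hqh
      rw [le_div_iff₀ hk0]; nlinarith
    have hy2 : p.2 - q.2 ≤ 1/k := by
      rw [← heq] at hql
      rw [le_div_iff₀ hk0]; nlinarith
    apply sup_le <;> rw [abs_sub_le_iff] <;> constructor <;>
      rw [← heq] <;> linarith
  · -- strip increases
    have hd1 : (sp : ℝ) + 1 ≤ sq := by
      have h1 : sp + 1 ≤ sq := Int.add_one_le_iff.mpr (by exact_mod_cast hlt)
      exact_mod_cast h1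
    have hdiv : (0:ℝ) ≤ ((sq:ℝ) - sp) / k := div_nonneg (by linarith) (le_of_lt hk0)
    have hy1 : q.2 - p.2 ≤ ((sq:ℝ) - sp) / k + 1/k := by
      rw [← add_div, le_div_iff₀ hk0]; nlinarith
    have hpq2 : p.2 ≤ q.2 := by nlinarith
    apply sup_le <;> rw [abs_sub_le_iff] <;> constructor <;> linarith

theorem tsp_le_five_sqrt (n : ℕ) (hn : 16 ≤ n) (P : Finset (ℝ × ℝ)) (hP : P.Nonempty)
    (hcard : P.card ≤ n)
    (hsubU : ∀ p ∈ P, 0 ≤ p.1 ∧ p.1 ≤ 1 ∧ 0 ≤ p.2 ∧ p.2 ≤ 1) :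
    tspLength P ≤ 5 * Real.sqrt n := by
  classical
  set k : ℕ := Nat.sqrt n + 1 with hkdef
  have hk : 1 ≤ k := Nat.le_add_left 1 _
  have hk0 : (0 : ℝ) < k := by exact_mod_cast Nat.lt_of_lt_of_le Nat.zero_lt_one hk
  set K : ℝ × ℝ → ℝ := fun p => 2 * ((⌊(k : ℝ) * p.2⌋ : ℤ) : ℝ) + p.1 with hKdef
  set f : ℝ × ℝ → ℝ := fun p => p.1 + (2 + 1/k) * ((⌊(k : ℝ) * p.2⌋ : ℤ) : ℝ) with hfdef
  set R : ℝ × ℝ → ℝ × ℝ → Prop := fun p q => K p ≤ K q with hRdef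
  haveI : DecidableRel R := fun p q => Real.decidableLE _ _
  haveI : IsTotal (ℝ × ℝ) R := ⟨fun a b => le_total _ _⟩
  haveI : IsTrans (ℝ × ℝ) R := ⟨fun a b c => le_trans⟩
  set l : List (ℝ × ℝ) := List.insertionSort R P.toList with hldef
  have hperm : l.Perm P.toList := List.perm_insertionSort R P.toList
  have hfs : l.toFinset = P := by
    rw [toFinset_perm hperm, Finset.toList_toFinset]
  have hmemP : ∀ x ∈ l, x ∈ P := by
    intro x hx
    rw [← hfs]
    exact List.mem_toFinset.mpr hx
  have hlne : l ≠ [] := by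
    intro h
    have : P = ∅ := by rw [← hfs, h]; simp
    exact hP.ne_empty this
  have hlen : l.length = P.card := by
    rw [hperm.length_eq, Finset.length_toList]
  have hch : List.Chain' R l :=
    List.isChain_iff_pairwise.mpr (List.pairwise_insertionSort R P.toList)
  have hedge : ∀ p ∈ l, ∀ q ∈ l, R p q → dist p q ≤ f q - f p + 1/k := by
    intro p hp q hq hpq
    obtain ⟨a1, a2, a3, a4⟩ := hsubU p (hmemP p hp)
    obtain ⟨b1, b2, b3, b4⟩ := hsubU q (hmemP q hq)
    exact edge_bound k hk p q a1 a2 a3 a4 b1 b2 b3 b4 hpq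
  have hpath := pathLength_chain_bound f (1/k) (by positivity) R l hlne hch hedge
  have hfb : ∀ x ∈ P, 0 ≤ f x ∧ f x ≤ 1 + (2 + 1/(k:ℝ)) * k := by
    intro x hx
    obtain ⟨a1, a2, a3, a4⟩ := hsubU x hx
    have h0 : (0:ℝ) ≤ ((⌊(k : ℝ) * x.2⌋ : ℤ) : ℝ) := by
      have : (0 : ℤ) ≤ ⌊(k : ℝ) * x.2⌋ := Int.floor_nonneg.mpr (by positivity)
      exact_mod_cast this
    have hkk : ((⌊(k : ℝ) * x.2⌋ : ℤ) : ℝ) ≤ k := by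
      have h : (k:ℝ) * x.2 ≤ ((k : ℤ) : ℝ) := by push_cast; nlinarith
      have h2 : ⌊(k : ℝ) * x.2⌋ ≤ (k : ℤ) := by
        have h3 := Int.floor_mono h
        rwa [Int.floor_intCast] at h3
      exact_mod_cast h2
    have hc : (0:ℝ) ≤ 2 + 1/(k:ℝ) := by positivity
    constructor
    · simp only [hfdef]
      nlinarith
    · simp only [hfdef]
      nlinarith
  have hhead : headD' l 0 ∈ P := hmemP _ (headD'_mem l hlne 0)
  have hlast : lastD' l 0 ∈ P := hmemP _ (lastD'_mem l hlne 0)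
  have hclose : dist (lastD' l 0) (headD' l 0) ≤ 1 := by
    obtain ⟨a1, a2, a3, a4⟩ := hsubU _ hlast
    obtain ⟨b1, b2, b3, b4⟩ := hsubU _ hhead
    rw [Prod.dist_eq, Real.dist_eq, Real.dist_eq]
    apply sup_le <;> rw [abs_sub_le_iff] <;> constructor <;> linarith
  have hlen' : ((l.length : ℝ) - 1) ≤ n := by
    have h1 : l.length ≤ n := hlen ▸ hcard
    have h2 := (Nat.cast_le (α := ℝ)).mpr h1
    linarith
  have hmul : ((l.length : ℝ) - 1) * (1/(k:ℝ)) ≤ (n : ℝ) * (1/(k:ℝ)) :=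
    mul_le_mul_of_nonneg_right hlen' (by positivity)
  clear_value K f R l
  have h1 := (hfb _ hlast).2
  have h2 := (hfb _ hhead).1
  have htour : tourLength l ≤ (1 + (2 + 1/(k:ℝ)) * k) + (n : ℝ) * (1/(k:ℝ)) + 1 := by
    rw [tourLength_eq l hlne 0 0]
    linarith
  have hP5 : tspLength P ≤ (1 + (2 + 1/(k:ℝ)) * k) + (n : ℝ) * (1/(k:ℝ)) + 1 := by
    calc tspLength P = tspLength l.toFinset := by rw [hfs]
      _ ≤ tourLength l := tspLength_le_tourLength l hlne
      _ ≤ _ := htour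
  have hsq : Real.sqrt n * Real.sqrt n = n := Real.mul_self_sqrt (by positivity)
  have hks : (k : ℝ) ≤ Real.sqrt n + 1 := by
    have h1 : ((Nat.sqrt n : ℝ)) ≤ Real.sqrt n := by
      rw [show ((Nat.sqrt n : ℝ)) = Real.sqrt ((Nat.sqrt n : ℝ)^2) by
        rw [Real.sqrt_sq (by positivity)]]
      apply Real.sqrt_le_sqrt
      exact_mod_cast Nat.sqrt_le' n
    have h2 : (k : ℝ) = (Nat.sqrt n : ℝ) + 1 := by rw [hkdef]; push_cast; ring
    linarith
  have hsk : Real.sqrt n ≤ (k : ℝ) := by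
    have hnn : n < k^2 := by simpa [hkdef] using Nat.lt_succ_sqrt' n
    have h2 : (n:ℝ) ≤ (k:ℝ)^2 := by exact_mod_cast hnn.le
    calc Real.sqrt n ≤ Real.sqrt ((k:ℝ)^2) := Real.sqrt_le_sqrt h2
      _ = k := Real.sqrt_sq (by positivity)
  have hnk : (n : ℝ) * (1/(k:ℝ)) ≤ Real.sqrt n := by
    rw [mul_one_div, div_le_iff₀ hk0]
    calc (n : ℝ) = Real.sqrt n * Real.sqrt n := hsq.symm
      _ ≤ Real.sqrt n * k := mul_le_mul_of_nonneg_left hsk (Real.sqrt_nonneg _)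
  have hkk' : (2 + 1/(k:ℝ)) * (k:ℝ) = 2*(k:ℝ) + 1 := by field_simp
  have hsqrt4 : (4 : ℝ) ≤ Real.sqrt n := by
    have h16 : Real.sqrt 16 = 4 := by
      rw [show (16:ℝ) = 4^2 by norm_num]
      exact Real.sqrt_sq (by norm_num)
    calc (4:ℝ) = Real.sqrt 16 := h16.symm
      _ ≤ Real.sqrt n := Real.sqrt_le_sqrt (by exact_mod_cast hn)
  calc tspLength P ≤ (1 + (2 + 1/(k:ℝ)) * k) + (n : ℝ) * (1/(k:ℝ)) + 1 := hP5
    _ = 2 * (k:ℝ) + (n : ℝ) * (1/(k:ℝ)) + 3 := by rw [hkk']; ring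
    _ ≤ 2 * (Real.sqrt n + 1) + Real.sqrt n + 3 := by linarith
    _ = 3 * Real.sqrt n + 5 := by ring
    _ ≤ 5 * Real.sqrt n := by linarith

lemma rtg_boundary {V : Type*} {radj : V → V → Prop} {S : Set V} :
    ∀ {a b : V}, Relation.ReflTransGen radj a b → a ∈ S → b ∉ S →
      ∃ u v, u ∈ S ∧ v ∉ S ∧ radj u v := by
  intro a b h
  induction h with
  | refl => intro ha hb; exact absurd ha hb
  | @tail c d hac hcd ih =>
    intro ha hd
    by_cases hc : c ∈ S
    · exact ⟨c, d, hc, hd, hcd⟩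
    · exact ih ha hc

lemma exists_closed_walk {V : Type*} [DecidableEq V] (radj : V → V → Prop)
    (hsym : ∀ u v, radj u v → radj v u) (A : Finset V)
    (hadj : ∀ u v, radj u v → u ∈ A ∧ v ∈ A)
    (hconn : ∀ a ∈ A, ∀ b ∈ A, Relation.ReflTransGen radj a b)
    (hA : A.Nonempty) :
    ∃ W : List V, W ≠ [] ∧ (∀ a ∈ A, a ∈ W) ∧ List.Chain' radj W ∧
      W.length ≤ 2 * A.card - 1 ∧ ∀ d : V, headD' W d = lastD' W d := by
  obtain ⟨a₀, ha₀⟩ := hA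
  -- grow a closed walk
  suffices h : ∀ (m : ℕ) (S : Finset V) (W : List V), S ⊆ A → S.Nonempty →
      (A \ S).card ≤ m →
      (W ≠ [] ∧ (∀ a ∈ S, a ∈ W) ∧ (∀ a ∈ W, a ∈ S) ∧ List.Chain' radj W ∧
        W.length ≤ 2 * S.card - 1 ∧ ∀ d : V, headD' W d = lastD' W d) →
      ∃ W' : List V, W' ≠ [] ∧ (∀ a ∈ A, a ∈ W') ∧ List.Chain' radj W' ∧
        W'.length ≤ 2 * A.card - 1 ∧ ∀ d : V, headD' W' d = lastD' W' d by
    refine h (A \ {a₀}).card {a₀} ([a₀]) (Finset.singleton_subset_iff.mpr ha₀)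
      (Finset.singleton_nonempty _) le_rfl ?_
    refine ⟨by simp, by simp, by simp, List.isChain_singleton _, by simp, fun d => rfl⟩
  intro m
  induction m with
  | zero =>
    intro S W hSA hSne hcard ⟨h1, h2, h3, h4, h5, h6⟩
    have hSA' : S = A := by
      have : A \ S = ∅ := Finset.card_eq_zero.mp (Nat.le_zero.mp hcard)
      apply Finset.Subset.antisymm hSA
      intro x hx
      by_contra hxS
      have : x ∈ A \ S := Finset.mem_sdiff.mpr ⟨hx, hxS⟩
      simp [‹A \ S = ∅›] at this
    subst hSA'
    exact ⟨W, h1, h2, h4, h5, h6⟩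
  | succ m ih =>
    intro S W hSA hSne hcard ⟨h1, h2, h3, h4, h5, h6⟩
    by_cases hall : A ⊆ S
    · have hSA' : S = A := Finset.Subset.antisymm hSA hall
      subst hSA'
      exact ⟨W, h1, h2, h4, h5, h6⟩
    · obtain ⟨b, hbA, hbS⟩ := Finset.not_subset.mp hall
      obtain ⟨a, haS⟩ := hSne
      have hrtg : Relation.ReflTransGen radj a b := hconn a (hSA haS) b hbA
      obtain ⟨u, v, huS, hvS, huv⟩ :=
        rtg_boundary (S := (S : Set V)) hrtg (by exact_mod_cast haS) (by exact_mod_cast hbS)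
      have huS' : u ∈ S := by exact_mod_cast huS
      have hvS' : v ∉ S := by exact_mod_cast hvS
      have hvA : v ∈ A := (hadj u v huv).2
      have huW : u ∈ W := h2 u huS'
      obtain ⟨W₁, W₂, rfl⟩ := List.append_of_mem huW
      have hch : List.Chain' radj (W₁ ++ u :: v :: u :: W₂) := by
        unfold List.Chain' at h4 ⊢
        rw [List.isChain_append] at h4 ⊢
        refine ⟨h4.1, ?_, ?_⟩
        · rw [List.isChain_cons_cons, List.isChain_cons_cons]
          exact ⟨huv, hsym u v huv, h4.2.1⟩
        · intro x hx y hy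
          apply h4.2.2 x hx
          simpa using hy
      refine ih (insert v S) (W₁ ++ u :: v :: u :: W₂) (Finset.insert_subset hvA hSA)
        ⟨v, Finset.mem_insert_self _ _⟩ ?_ ⟨?_, ?_, ?_, hch, ?_, ?_⟩
      · -- card
        have hveq : A \ insert v S = (A \ S).erase v := by
          ext x
          simp only [Finset.mem_erase, Finset.mem_sdiff, Finset.mem_insert]
          tauto
        rw [hveq]
        have hvAS : v ∈ A \ S := Finset.mem_sdiff.mpr ⟨hvA, hvS'⟩
        have := Finset.card_erase_of_mem hvAS
        omega
      · simp
      · intro x hx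
        rcases Finset.mem_insert.mp hx with rfl | hxS
        · simp
        · have := h2 x hxS
          simp only [List.mem_append, List.mem_cons] at this ⊢
          tauto
      · intro x hx
        simp only [List.mem_append, List.mem_cons] at hx
        rcases hx with hx | hx | hx | hx | hx
        · exact Finset.mem_insert_of_mem (h3 x (by simp [hx]))
        · subst hx; exact Finset.mem_insert_of_mem huS'
        · subst hx; exact Finset.mem_insert_self _ _
        · subst hx; exact Finset.mem_insert_of_mem huS'
        · exact Finset.mem_insert_of_mem (h3 x (by simp [hx]))
      · -- length
        have hlW : (W₁ ++ u :: W₂).length = W₁.length + W₂.length + 1 := by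
          simp [List.length_append]; omega
        have hlW' : (W₁ ++ u :: v :: u :: W₂).length = W₁.length + W₂.length + 3 := by
          simp [List.length_append]; omega
        have hcard' : (insert v S).card = S.card + 1 := Finset.card_insert_of_notMem hvS'
        have hSpos : 1 ≤ S.card := Finset.card_pos.mpr ⟨a, haS⟩
        omega
      · -- head = last
        intro d
        have hh : headD' (W₁ ++ u :: v :: u :: W₂) d = headD' (W₁ ++ u :: W₂) d := by
          cases W₁ <;> simp
        have hl : lastD' (W₁ ++ u :: v :: u :: W₂) d = lastD' (W₁ ++ u :: W₂) d := by
          rw [lastD'_append, lastD'_append]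
          simp
        rw [hh, hl]
        exact h6 d

section Splice

variable {ι : Type*} [DecidableEq ι] [Fintype ι]

noncomputable def splice (wl : ι → List (ℝ × ℝ)) : List ι → Finset ι → List (ℝ × ℝ)
  | [], _ => []
  | l :: W, V =>
      (if l ∈ V then [headD' (wl l) 0] else wl l) ++ splice wl W (insert l V)

lemma splice_piece_ne (wl : ι → List (ℝ × ℝ)) (hwl : ∀ l, wl l ≠ []) (l : ι) (V : Finset ι) :
    (if l ∈ V then [headD' (wl l) 0] else wl l) ≠ [] := by
  split
  · simp
  · exact hwl l

lemma splice_piece_sub (wl : ι → List (ℝ × ℝ)) (hwl : ∀ l, wl l ≠ []) (l : ι) (V : Finset ι) :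
    ∀ x ∈ (if l ∈ V then [headD' (wl l) 0] else wl l), x ∈ wl l := by
  split
  · intro x hx
    simp only [List.mem_singleton] at hx
    subst hx
    exact headD'_mem _ (hwl l) 0
  · intro x hx; exact hx

lemma splice_ne (wl : ι → List (ℝ × ℝ)) (hwl : ∀ l, wl l ≠ []) (W : List ι) (V : Finset ι)
    (hW : W ≠ []) : splice wl W V ≠ [] := by
  cases W with
  | nil => exact absurd rfl hW
  | cons l W' =>
    rw [splice]
    intro h
    rcases List.append_eq_nil_iff.mp h with ⟨h1, -⟩
    exact splice_piece_ne wl hwl l V h1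

lemma splice_mem (wl : ι → List (ℝ × ℝ)) (hwl : ∀ l, wl l ≠ []) :
    ∀ (W : List ι) (V : Finset ι), ∀ x ∈ splice wl W V, ∃ l ∈ W, x ∈ wl l := by
  intro W
  induction W with
  | nil => intro V x hx; simp [splice] at hx
  | cons l W' ih =>
    intro V x hx
    rw [splice, List.mem_append] at hx
    rcases hx with hx | hx
    · exact ⟨l, by simp, splice_piece_sub wl hwl l V x hx⟩
    · obtain ⟨l', hl', hxl'⟩ := ih (insert l V) x hx
      exact ⟨l', by simp [hl'], hxl'⟩

lemma splice_cover (wl : ι → List (ℝ × ℝ)) :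
    ∀ (W : List ι) (V : Finset ι) (l : ι), l ∈ W → l ∉ V → ∀ x ∈ wl l, x ∈ splice wl W V := by
  intro W
  induction W with
  | nil => intro V l hl; simp at hl
  | cons l₀ W' ih =>
    intro V l hl hlV x hx
    rw [splice, List.mem_append]
    by_cases he : l = l₀
    · subst he
      left
      rw [if_neg hlV]
      exact hx
    · right
      have hl' : l ∈ W' := by
        rcases List.mem_cons.mp hl with h | h
        · exact absurd h he
        · exact h
      exact ih (insert l₀ V) l hl' (by simp [hlV, he]) x hx

lemma splice_head (wl : ι → List (ℝ × ℝ)) (hwl : ∀ l, wl l ≠ []) (l : ι) (W : List ι)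
    (V : Finset ι) : headD' (splice wl (l :: W) V) 0 ∈ wl l := by
  rw [splice, headD'_append_ne_nil _ _ (splice_piece_ne wl hwl l V)]
  exact splice_piece_sub wl hwl l V _ (headD'_mem _ (splice_piece_ne wl hwl l V) 0)

lemma splice_last (wl : ι → List (ℝ × ℝ)) (hwl : ∀ l, wl l ≠ []) :
    ∀ (W : List ι) (l : ι) (V : Finset ι) (d : ℝ × ℝ),
      lastD' (splice wl (l :: W) V) d ∈ wl (lastD' W l) := by
  intro W
  induction W with
  | nil =>
    intro l V d
    rw [splice, splice]
    simp only [List.append_nil, lastD'_nil]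
    exact splice_piece_sub wl hwl l V _ (lastD'_mem _ (splice_piece_ne wl hwl l V) d)
  | cons l' W' ih =>
    intro l V d
    rw [splice, lastD'_append]
    simpa using ih l' (insert l V) _

lemma splice_cost (wl : ι → List (ℝ × ℝ)) (hwl : ∀ l, wl l ≠ [])
    (adjC : ι → ι → Prop) (cr : ℝ) (hcr : 0 ≤ cr)
    (hadj : ∀ l l', adjC l l' → ∀ x ∈ wl l, ∀ y ∈ wl l', dist x y ≤ cr) :
    ∀ (W : List ι) (V : Finset ι), List.Chain' adjC W →
      pathLength (splice wl W V) ≤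
        (∑ l ∈ Finset.univ \ V, pathLength (wl l)) + ((W.length - 1 : ℕ) : ℝ) * cr := by
  have hsum : ∀ V : Finset ι, 0 ≤ ∑ l ∈ Finset.univ \ V, pathLength (wl l) :=
    fun V => Finset.sum_nonneg fun l _ => pathLength_nonneg _
  intro W
  induction W with
  | nil =>
    intro V _
    simp only [splice, pathLength_nil, List.length_nil]
    simpa using hsum V
  | cons l W' ih =>
    intro V hch
    cases W' with
    | nil =>
      rw [splice, splice, List.append_nil]
      simp only [List.length_cons, List.length_nil]
      norm_num
      split
      · simpa using hsum V
      · rename_i hlV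
        calc pathLength (wl l) ≤ ∑ l' ∈ Finset.univ \ V, pathLength (wl l') := by
              apply Finset.single_le_sum (fun i _ => pathLength_nonneg (wl i))
              simp [hlV]
          _ ≤ _ := by simpa using hsum V |>.le.trans (le_refl _)
    | cons l' W'' =>
      unfold List.Chain' at hch
      rw [List.isChain_cons_cons] at hch
      have hrest_ne : splice wl (l' :: W'') (insert l V) ≠ [] :=
        splice_ne wl hwl _ _ (by simp)
      rw [splice, pathLength_append _ _ (splice_piece_ne wl hwl l V) hrest_ne 0 0]
      have hlast_piece : lastD' (if l ∈ V then [headD' (wl l) 0] else wl l) 0 ∈ wl l :=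
        splice_piece_sub wl hwl l V _ (lastD'_mem _ (splice_piece_ne wl hwl l V) 0)
      have hhead_rest : headD' (splice wl (l' :: W'') (insert l V)) 0 ∈ wl l' :=
        splice_head wl hwl l' W'' (insert l V)
      have hjump : dist (lastD' (if l ∈ V then [headD' (wl l) 0] else wl l) 0)
          (headD' (splice wl (l' :: W'') (insert l V)) 0) ≤ cr :=
        hadj l l' hch.1 _ hlast_piece _ hhead_rest
      have ihr := ih (insert l V) hch.2
      have hpiece : pathLength (if l ∈ V then [headD' (wl l) 0] else wl l) +
          ∑ l' ∈ Finset.univ \ insert l V, pathLength (wl l') ≤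
          ∑ l' ∈ Finset.univ \ V, pathLength (wl l') := by
        by_cases hlV : l ∈ V
        · rw [if_pos hlV, pathLength_single]
          rw [Finset.insert_eq_self.mpr hlV]
          simp
        · rw [if_neg hlV]
          have hins : Finset.univ \ insert l V = (Finset.univ \ V).erase l := by
            ext x
            simp only [Finset.mem_erase, Finset.mem_sdiff, Finset.mem_insert, Finset.mem_univ,
              true_and]
            tauto
          rw [hins]
          have hmem : l ∈ Finset.univ \ V := by simp [hlV]
          rw [add_comm]
          exact le_of_eq (Finset.sum_erase_add _ _ hmem)
      have hlen : (((l :: l' :: W'').length - 1 : ℕ) : ℝ) =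
          (((l' :: W'').length - 1 : ℕ) : ℝ) + 1 := by
        simp only [List.length_cons]
        push_cast
        ring
      rw [hlen]
      linarith

end Splice

lemma mem_square_iff {c : ℝ × ℝ} {ρ : ℝ} {x : ℝ × ℝ} :
    x ∈ square c ρ ↔ c.1 ≤ x.1 ∧ x.1 ≤ c.1 + ρ ∧ c.2 ≤ x.2 ∧ x.2 ≤ c.2 + ρ := by
  simp [square, Set.mem_Icc, Prod.le_def]
  tauto

lemma dist_le_of_same_square {c : ℝ × ℝ} {ρ : ℝ} (hρ : 0 ≤ ρ) {x y : ℝ × ℝ}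
    (hx : x ∈ square c ρ) (hy : y ∈ square c ρ) : dist x y ≤ ρ := by
  rw [mem_square_iff] at hx hy
  obtain ⟨a1, a2, a3, a4⟩ := hx
  obtain ⟨b1, b2, b3, b4⟩ := hy
  rw [Prod.dist_eq, Real.dist_eq, Real.dist_eq]
  apply sup_le <;> rw [abs_sub_le_iff] <;> constructor <;> linarith

lemma dist_le_of_adj_squares {ρ σ : ℝ} (hρ : 0 ≤ ρ) (hσ : 0 ≤ σ) (a b : ℤ × ℤ)
    (hab : |a.1 - b.1| + |a.2 - b.2| = 1) {x y : ℝ × ℝ}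
    (hx : x ∈ square ((ρ + σ) * (a.1 : ℝ), (ρ + σ) * (a.2 : ℝ)) ρ)
    (hy : y ∈ square ((ρ + σ) * (b.1 : ℝ), (ρ + σ) * (b.2 : ℝ)) ρ) :
    dist x y ≤ σ + 2 * ρ := by
  have n1 := abs_nonneg (a.1 - b.1)
  have n2 := abs_nonneg (a.2 - b.2)
  have h1 : |a.1 - b.1| ≤ 1 := by linarith
  have h2 : |a.2 - b.2| ≤ 1 := by linarith
  have h1' : |(a.1 : ℝ) - (b.1 : ℝ)| ≤ 1 := by
    rw [show (a.1 : ℝ) - (b.1 : ℝ) = ((a.1 - b.1 : ℤ) : ℝ) by push_cast; ring, ← Int.cast_abs]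
    exact_mod_cast h1
  have h2' : |(a.2 : ℝ) - (b.2 : ℝ)| ≤ 1 := by
    rw [show (a.2 : ℝ) - (b.2 : ℝ) = ((a.2 - b.2 : ℤ) : ℝ) by push_cast; ring, ← Int.cast_abs]
    exact_mod_cast h2
  rw [mem_square_iff] at hx hy
  dsimp only at hx hy
  obtain ⟨a1, a2, a3, a4⟩ := hx
  obtain ⟨b1, b2, b3, b4⟩ := hy
  have e1 : (a.1 : ℝ) - b.1 ≤ |(a.1 : ℝ) - b.1| := le_abs_self _
  have e2 : (b.1 : ℝ) - a.1 ≤ |(a.1 : ℝ) - b.1| := by rw [abs_sub_comm]; exact le_abs_self _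
  have e3 : (a.2 : ℝ) - b.2 ≤ |(a.2 : ℝ) - b.2| := le_abs_self _
  have e4 : (b.2 : ℝ) - a.2 ≤ |(a.2 : ℝ) - b.2| := by rw [abs_sub_comm]; exact le_abs_self _
  have m1 : (ρ + σ) * ((a.1 : ℝ) - b.1) ≤ ρ + σ := by nlinarith
  have m2 : (ρ + σ) * ((b.1 : ℝ) - a.1) ≤ ρ + σ := by nlinarith
  have m3 : (ρ + σ) * ((a.2 : ℝ) - b.2) ≤ ρ + σ := by nlinarith
  have m4 : (ρ + σ) * ((b.2 : ℝ) - a.2) ≤ ρ + σ := by nlinarith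
  rw [Prod.dist_eq, Real.dist_eq, Real.dist_eq]
  apply sup_le <;> rw [abs_sub_le_iff] <;> constructor <;> nlinarith

lemma tourLength_single (a : ℝ × ℝ) : tourLength [a] = 0 := by
  have : ([a] : List (ℝ × ℝ)).rotate 1 = [a] := by
    rw [List.rotate_cons_succ, List.rotate_zero]; rfl
  simp [tourLength, this]

lemma tourLength_pair (a b : ℝ × ℝ) : tourLength [a, b] = dist a b + dist b a := by
  have : ([a, b] : List (ℝ × ℝ)).rotate 1 = [b, a] := by
    rw [List.rotate_cons_succ, List.rotate_zero]; rfl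
  simp [tourLength, this]

lemma exists_city_list (Q : Finset (ℝ × ℝ)) (hQ : Q.Nonempty) (ρ : ℝ) (hρ : 0 < ρ)
    (hdiam : ∀ x ∈ Q, ∀ y ∈ Q, dist x y ≤ ρ) :
    ∃ w : List (ℝ × ℝ), w ≠ [] ∧ w.toFinset = Q ∧ tourLength w ≤ tspLength Q + 2 * ρ := by
  by_cases h3 : 3 ≤ Q.card
  · obtain ⟨w, hnd, hfs, hle⟩ := exists_good_tour Q h3 (by positivity : (0:ℝ) < 2 * ρ)
    refine ⟨w, ?_, hfs, hle⟩
    intro h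
    rw [h] at hfs
    exact hQ.ne_empty (by simpa using hfs.symm)
  · push_neg at h3
    have htsp : tspLength Q = 0 := by rw [tspLength, if_pos (by omega)]
    have hlen : Q.toList.length ≤ 2 := by rw [Finset.length_toList]; omega
    have hne : Q.toList ≠ [] := by
      intro h
      exact hQ.ne_empty (Finset.toList_eq_nil.mp h)
    have hfs : Q.toList.toFinset = Q := Finset.toList_toFinset Q
    refine ⟨Q.toList, hne, hfs, ?_⟩
    rw [htsp, zero_add]
    have hmem : ∀ x ∈ Q.toList, x ∈ Q := fun x hx => Finset.mem_toList.mp hx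
    match hQL : Q.toList, hlen, hne, hmem with
    | [a], _, _, hmem =>
      rw [tourLength_single]
      positivity
    | [a, b], _, _, hmem =>
      rw [tourLength_pair]
      have h1 := hdiam a (hmem a (by simp)) b (hmem b (by simp))
      have h2 := hdiam b (hmem b (by simp)) a (hmem a (by simp))
      linarith

/-- Lemma 5, (3.1): upper bound for `TSPC_n` by the sum of the in-city
TSP lengths plus a crossing cost, on the event `U_tot`, and by `5 sqrt n` otherwise. -/
theorem tspc_upper_bound_by_city_sums
    (Ω : Type) [MeasurableSpace Ω] (Pr : Measure Ω) [IsProbabilityMeasure Pr]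
    (ε₁ ε₂ : ℝ) (hε₁ : 0 < ε₁) (hε₁₂ : ε₁ ≤ ε₂)
    (f : ℝ × ℝ → ℝ) (hfm : Measurable f)
    (hf : ∀ x ∈ unitSquare, ε₁ ≤ f x ∧ f x ≤ ε₂)
    (hf1 : ∫ x in unitSquare, f x = 1)
    (r s : ℕ → ℝ) (Nc : ℕ → ℕ)
    (hr : ∀ n, 0 < r n) (hs : ∀ n, 0 < s n)
    (hint : ∀ n, ∃ k : ℕ, 1 - r n = k * (r n + s n))
    (z : ∀ n : ℕ, Fin (Nc n) → ℤ × ℤ)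
    (hzinj : ∀ n, Function.Injective (z n))
    (city : ∀ n : ℕ, Fin (Nc n) → Set (ℝ × ℝ))
    (hcity : ∀ n l, city n l =
      square ((r n + s n) * ((z n l).1 : ℝ), (r n + s n) * ((z n l).2 : ℝ)) (r n))
    (hsub : ∀ n l, city n l ⊆ unitSquare)
    (hconn : ∀ n, latticeConnected (Set.range (z n)))
    (X : (n : ℕ) → Fin n → Ω → ℝ × ℝ)
    (hXm : ∀ n i, Measurable (X n i))
    (hiid : ∀ n, iIndepFun (X n) Pr)
    (hlaw : ∀ n i, Measure.map (X n i) Pr =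
      (volume.restrict (⋃ l, city n l)).withDensity
        fun x => ENNReal.ofReal (f x / ∫ y in (⋃ l, city n l), f y))
    (TSPC : (n : ℕ) → Ω → ℝ)
    (hTSPC : ∀ n ω, TSPC n ω = tspLength (Finset.univ.image fun i : Fin n => X n i ω))
    (b : ℕ → ℝ) (hb : ∀ n, b n = r n * Real.sqrt ((n : ℝ) * (Nc n : ℝ)))
    (T : (n : ℕ) → Fin (Nc n) → Ω → ℝ)
    (hT : ∀ n l ω, T n l ω = tspLength
      ((Finset.univ.image fun i : Fin n => X n i ω).filter (fun p => p ∈ city n l)))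
    (Ncount : (n : ℕ) → Fin (Nc n) → Ω → ℕ)
    (hNcount : ∀ n l ω, Ncount n l ω =
      (Finset.univ.filter fun i : Fin n => X n i ω ∈ city n l).card)
    (U : (n : ℕ) → Fin (Nc n) → Set Ω)
    (hU : ∀ n l, U n l = {ω |
      ε₁ / ε₂ * n / (2 * Nc n) ≤ (Ncount n l ω : ℝ) ∧
      (Ncount n l ω : ℝ) ≤ 2 * (ε₂ / ε₁) * n / Nc n}) :
    ∀ M : ℝ, 0 < M →
      ((∀ n : ℕ, M * Real.log n / n ≤ r n ^ 2) ∧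
        Tendsto (fun n : ℕ => (n : ℝ) / (Nc n : ℝ) ^ 2) atTop (nhds 0) ∧
        Tendsto (fun n : ℕ => (Nc n : ℝ) * s n / b n) atTop (nhds 0)) →
      ∀ n : ℕ, 8 ≤ ε₁ / ε₂ * n / (2 * Nc n) →
        ∀ᵐ ω ∂Pr, TSPC n ω ≤
          if ω ∈ ⋂ l, U n l then
            (∑ l : Fin (Nc n), T n l ω) + 2 * (Nc n : ℝ) * (s n + 8 * r n)
          else 5 * Real.sqrt n := by
  intro M hM hNest n h8
  have hε₂ : 0 < ε₂ := lt_of_lt_of_le hε₁ hε₁₂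
  have hNpos : 0 < Nc n := by
    rcases Nat.eq_zero_or_pos (Nc n) with h0 | h
    · rw [h0] at h8
      norm_num at h8
    · exact h
  have hN1 : (1 : ℝ) ≤ Nc n := by exact_mod_cast hNpos
  have hn16 : 16 ≤ n := by
    have hd : ε₁ / ε₂ * n / (2 * Nc n) ≤ (n : ℝ) / 2 := by
      apply div_le_div₀ (Nat.cast_nonneg n) ?_ (by norm_num) (by linarith)
      calc ε₁ / ε₂ * n ≤ 1 * n := by
            apply mul_le_mul_of_nonneg_right _ (Nat.cast_nonneg n)
            exact div_le_one_of_le₀ hε₁₂ (le_of_lt hε₂)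
        _ = n := one_mul _
    have h16 : (16 : ℝ) ≤ n := by linarith
    exact_mod_cast h16
  haveI : Nonempty (Fin n) := ⟨⟨0, by omega⟩⟩
  have hrn := hr n
  have hsn := hs n
  have hcitym : ∀ l, MeasurableSet (city n l) := by
    intro l
    rw [hcity n l]
    show MeasurableSet (Set.Icc _ _)
    rw [Set.Icc_prod_eq]
    exact measurableSet_Icc.prod measurableSet_Icc
  have hCUm : MeasurableSet (⋃ l, city n l) := MeasurableSet.iUnion fun l => hcitym l
  have hae : ∀ᵐ ω ∂Pr, ∀ i : Fin n, X n i ω ∈ ⋃ l, city n l := by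
    rw [MeasureTheory.ae_all_iff]
    intro i
    have key : (Measure.map (X n i) Pr) (⋃ l, city n l)ᶜ = 0 := by
      rw [hlaw n i, MeasureTheory.withDensity_apply _ hCUm.compl,
        MeasureTheory.Measure.restrict_restrict hCUm.compl, Set.compl_inter_self,
        MeasureTheory.Measure.restrict_empty, MeasureTheory.lintegral_zero_measure]
    have h0 : Pr ((X n i) ⁻¹' (⋃ l, city n l)ᶜ) = 0 := by
      rw [← MeasureTheory.Measure.map_apply (hXm n i) hCUm.compl]
      exact key
    rw [MeasureTheory.ae_iff]
    exact h0
  filter_upwards [hae] with ω hω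
  rw [hTSPC]
  set Pts := Finset.univ.image fun i : Fin n => X n i ω with hPts
  have hPtsub : ∀ p ∈ Pts, p ∈ unitSquare := by
    intro p hp
    obtain ⟨i, -, rfl⟩ := Finset.mem_image.mp hp
    obtain ⟨l, hl⟩ := Set.mem_iUnion.mp (hω i)
    exact hsub n l hl
  by_cases hUtot : ω ∈ ⋂ l, U n l
  case neg =>
    rw [if_neg hUtot]
    apply tsp_le_five_sqrt n hn16 Pts
    · exact ⟨X n ⟨0, by omega⟩ ω, Finset.mem_image_of_mem _ (Finset.mem_univ _)⟩
    · calc Pts.card ≤ Finset.univ.card := Finset.card_image_le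
        _ = n := by simp
    · intro p hp
      have hmem := hPtsub p hp
      rw [unitSquare, mem_square_iff] at hmem
      dsimp only at hmem
      norm_num at hmem
      exact hmem
  case pos =>
    rw [if_pos hUtot]
    have hQne : ∀ l : Fin (Nc n), (Pts.filter (fun p => p ∈ city n l)).Nonempty := by
      intro l
      have hUl := Set.mem_iInter.mp hUtot l
      rw [hU n l] at hUl
      have h8' : (8 : ℝ) ≤ (Ncount n l ω : ℝ) := le_trans h8 hUl.1
      have hpos : 0 < Ncount n l ω := by
        by_contra h
        push_neg at h
        rw [Nat.le_zero] at h
        rw [h] at h8'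
        norm_num at h8'
      rw [hNcount n l ω] at hpos
      obtain ⟨i, hi⟩ := Finset.card_pos.mp hpos
      rw [Finset.mem_filter] at hi
      exact ⟨X n i ω, Finset.mem_filter.mpr
        ⟨Finset.mem_image_of_mem _ (Finset.mem_univ i), hi.2⟩⟩
    have hcity_diam : ∀ l : Fin (Nc n), ∀ x ∈ Pts.filter (fun p => p ∈ city n l),
        ∀ y ∈ Pts.filter (fun p => p ∈ city n l), dist x y ≤ r n := by
      intro l x hx y hy
      rw [Finset.mem_filter] at hx hy
      have hx2 := hx.2
      have hy2 := hy.2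
      rw [hcity n l] at hx2 hy2
      exact dist_le_of_same_square (le_of_lt hrn) hx2 hy2
    have hwl := fun l : Fin (Nc n) =>
      exists_city_list _ (hQne l) (r n) hrn (hcity_diam l)
    choose wl hwlne hwlfs hwlcost using hwl
    have hwlQ : ∀ l, ∀ x ∈ wl l, x ∈ Pts.filter (fun p => p ∈ city n l) := by
      intro l x hx
      rw [← hwlfs l]
      exact List.mem_toFinset.mpr hx
    have hwlcity : ∀ l, ∀ x ∈ wl l, x ∈ city n l :=
      fun l x hx => (Finset.mem_filter.mp (hwlQ l x hx)).2
    have hwlPts : ∀ l, ∀ x ∈ wl l, x ∈ Pts :=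
      fun l x hx => (Finset.mem_filter.mp (hwlQ l x hx)).1
    -- the walk on lattice points
    set radj : ℤ × ℤ → ℤ × ℤ → Prop := fun u v =>
      u ∈ Set.range (z n) ∧ v ∈ Set.range (z n) ∧ |u.1 - v.1| + |u.2 - v.2| = 1 with hradj
    set A : Finset (ℤ × ℤ) := Finset.univ.image (z n) with hA
    have hmemA : ∀ u : ℤ × ℤ, u ∈ A ↔ u ∈ Set.range (z n) := by
      intro u
      simp [hA, Set.mem_range]
    have hAcard : A.card = Nc n := by
      rw [hA, Finset.card_image_of_injective _ (hzinj n), Finset.card_univ, Fintype.card_fin]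
    obtain ⟨W, hWne, hWcov, hWch, hWlen, hWhl⟩ := exists_closed_walk radj
      (fun u v huv => ⟨huv.2.1, huv.1, by
        rw [abs_sub_comm v.1 u.1, abs_sub_comm v.2 u.2]; exact huv.2.2⟩)
      A (fun u v huv => ⟨(hmemA u).mpr huv.1, (hmemA v).mpr huv.2.1⟩)
      (fun a ha b hb => hconn n _ ((hmemA a).mp ha) _ ((hmemA b).mp hb))
      ⟨z n ⟨0, hNpos⟩, (hmemA _).mpr ⟨_, rfl⟩⟩
    set i₀ : Fin (Nc n) := ⟨0, hNpos⟩ with hi₀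
    set φ : ℤ × ℤ → Fin (Nc n) :=
      fun a => if h : ∃ l, z n l = a then h.choose else i₀ with hφdef
    have hφ : ∀ a ∈ Set.range (z n), z n (φ a) = a := by
      intro a ha
      obtain ⟨l, hl⟩ := ha
      rw [hφdef]
      dsimp only
      rw [dif_pos ⟨l, hl⟩]
      exact (⟨l, hl⟩ : ∃ l', z n l' = a).choose_spec
    have hφz : ∀ l, φ (z n l) = l := fun l => hzinj n (hφ _ ⟨l, rfl⟩)
    set adjC : Fin (Nc n) → Fin (Nc n) → Prop :=
      fun l l' => radj (z n l) (z n l') with hadjC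
    set W' : List (Fin (Nc n)) := W.map φ with hW'
    have hW'ne : W' ≠ [] := by
      rw [hW']
      simpa using hWne
    have hW'cov : ∀ l, l ∈ W' := by
      intro l
      rw [hW', List.mem_map]
      exact ⟨z n l, hWcov _ ((hmemA _).mpr ⟨l, rfl⟩), hφz l⟩
    have hW'ch : List.Chain' adjC W' := by
      rw [hW']
      unfold List.Chain'
      rw [List.isChain_map]
      apply List.IsChain.imp _ hWch
      intro a b hab
      show radj (z n (φ a)) (z n (φ b))
      rw [hφ a hab.1, hφ b hab.2.1]
      exact hab
    have hW'hl : headD' W' i₀ = lastD' W' i₀ := by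
      have h1 : i₀ = φ (z n i₀) := (hφz i₀).symm
      rw [hW', h1, headD'_map, lastD'_map, hWhl (z n i₀)]
    have hW'len : W'.length ≤ 2 * Nc n - 1 := by
      rw [hW', List.length_map, ← hAcard]
      exact hWlen
    have hadjd : ∀ l l', adjC l l' → ∀ x ∈ wl l, ∀ y ∈ wl l',
        dist x y ≤ s n + 2 * r n := by
      intro l l' hll' x hx y hy
      have hxs := hwlcity l x hx
      have hys := hwlcity l' y hy
      rw [hcity n l] at hxs
      rw [hcity n l'] at hys
      exact dist_le_of_adj_squares (le_of_lt hrn) (le_of_lt hsn) _ _ hll'.2.2 hxs hys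
    set sp := splice wl W' ∅ with hsp
    have hspne : sp ≠ [] := splice_ne wl hwlne W' ∅ hW'ne
    have hspfs : sp.toFinset = Pts := by
      apply Finset.Subset.antisymm
      · intro x hx
        rw [List.mem_toFinset] at hx
        obtain ⟨l, -, hxl⟩ := splice_mem wl hwlne W' ∅ x hx
        exact hwlPts l x hxl
      · intro x hx
        obtain ⟨i, -, hxi⟩ := Finset.mem_image.mp hx
        obtain ⟨l, hl⟩ := Set.mem_iUnion.mp (hxi ▸ hω i)
        have hxQ : x ∈ Pts.filter (fun p => p ∈ city n l) :=
          Finset.mem_filter.mpr ⟨hx, hl⟩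
        have hxwl : x ∈ wl l := List.mem_toFinset.mp (by rw [hwlfs l]; exact hxQ)
        rw [List.mem_toFinset]
        exact splice_cover wl W' ∅ l (hW'cov l) (Finset.notMem_empty l) _ hxwl
    have hcost := splice_cost wl hwlne adjC (s n + 2 * r n) (by linarith) hadjd W' ∅ hW'ch
    rw [Finset.sdiff_empty] at hcost
    obtain ⟨l₀, W₁, hW1⟩ := List.exists_cons_of_ne_nil hW'ne
    have hhead : headD' sp 0 ∈ wl l₀ := by
      rw [hsp, hW1]
      exact splice_head wl hwlne l₀ W₁ ∅
    have hl₀ : lastD' W₁ l₀ = l₀ := by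
      have h1 := hW'hl
      rw [hW1] at h1
      simpa using h1.symm
    have hlastm : lastD' sp 0 ∈ wl l₀ := by
      rw [hsp, hW1]
      have h2 := splice_last wl hwlne W₁ l₀ ∅ 0
      rwa [hl₀] at h2
    have hclose : dist (lastD' sp 0) (headD' sp 0) ≤ r n := by
      have h1 := hwlcity l₀ _ hlastm
      have h2 := hwlcity l₀ _ hhead
      rw [hcity n l₀] at h1 h2
      exact dist_le_of_same_square (le_of_lt hrn) h1 h2
    have htour : tourLength sp ≤ (∑ l, pathLength (wl l)) +
        ((W'.length - 1 : ℕ) : ℝ) * (s n + 2 * r n) + r n := by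
      rw [tourLength_eq sp hspne 0 0]
      linarith
    have hsum1 : ∀ l : Fin (Nc n), pathLength (wl l) ≤ T n l ω + 2 * r n := by
      intro l
      have h1 := pathLength_le_tourLength (wl l) (hwlne l)
      have h2 := hwlcost l
      rw [hT n l ω]
      linarith
    have hlenR : ((W'.length - 1 : ℕ) : ℝ) ≤ 2 * (Nc n : ℝ) := by
      have h1 : W'.length - 1 ≤ 2 * Nc n := by omega
      calc ((W'.length - 1 : ℕ) : ℝ) ≤ ((2 * Nc n : ℕ) : ℝ) := by exact_mod_cast h1
        _ = 2 * (Nc n : ℝ) := by push_cast; ring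
    calc tspLength Pts ≤ tourLength sp := by
          rw [← hspfs]
          exact tspLength_le_tourLength sp hspne
      _ ≤ (∑ l, pathLength (wl l)) + ((W'.length - 1 : ℕ) : ℝ) * (s n + 2 * r n) + r n :=
          htour
      _ ≤ (∑ l, (T n l ω + 2 * r n)) + 2 * (Nc n : ℝ) * (s n + 2 * r n) + r n := by
          have hs1 : (∑ l, pathLength (wl l)) ≤ ∑ l, (T n l ω + 2 * r n) :=
            Finset.sum_le_sum fun l _ => hsum1 l
          have hs2 : ((W'.length - 1 : ℕ) : ℝ) * (s n + 2 * r n) ≤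
              2 * (Nc n : ℝ) * (s n + 2 * r n) :=
            mul_le_mul_of_nonneg_right hlenR (by linarith)
          linarith
      _ = (∑ l, T n l ω) + (Nc n : ℝ) * (2 * r n) + 2 * (Nc n : ℝ) * (s n + 2 * r n)
            + r n := by
          rw [Finset.sum_add_distrib, Finset.sum_const, Finset.card_univ, Fintype.card_fin]
          push_cast
          ring
      _ ≤ (∑ l, T n l ω) + 2 * (Nc n : ℝ) * (s n + 8 * r n) := by
          nlinarith [hN1, hrn]


end
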